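/- Let Ṽ_1 be the normalised Wolbachia operator with η = 1. The set T = {(x₁,x₂,x₃,u) ∈ S^{3,1} : x₂ > 0} is the largest subset of S^{3,1} that is invariant under Ṽ_1; that is, Ṽ_1(T) ⊆ T, and every subset U ⊆ S^{3,1} with Ṽ_1(U) ⊆ U satisfies U ⊆ T. In particular, if s ∈ S^{3,1} has second coordinate x₂ = 0, then Ṽ_1(s) ∉ S^{3,1}. -/

import Mathlib

/-- The normalised Wolbachia gonosomal operator with parameter `η`
(defined for points whose first three coordinates have positive sum). -/
noncomputable def nWolbOp (η : ℝ) (p : ℝ × ℝ × ℝ × ℝ) : ℝ × ℝ × ℝ × ℝ :=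
  (η * (2 * p.1 + p.2.2.1) / (2 * (p.1 + p.2.1 + p.2.2.1)),
   (p.2.1 + (1 - η) * p.2.2.1) / (2 * (p.1 + p.2.1 + p.2.2.1)),
   η * p.2.2.1 / (2 * (p.1 + p.2.1 + p.2.2.1)),
   ((1 - η) * (2 * p.1 + p.2.2.1) + p.2.1) / (2 * (p.1 + p.2.1 + p.2.2.1)))

/-- The set `S^{3,1}` of frequency distributions. -/
def S31 : Set (ℝ × ℝ × ℝ × ℝ) :=
  {p | 0 ≤ p.1 ∧ 0 ≤ p.2.1 ∧ 0 ≤ p.2.2.1 ∧ 0 ≤ p.2.2.2 ∧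
       0 < p.1 + p.2.1 + p.2.2.1 ∧ 0 < p.2.2.2 ∧
       p.1 + p.2.1 + p.2.2.1 + p.2.2.2 = 1}

theorem nWolbOp_one_largest_invariant :
    (∀ p ∈ {q ∈ S31 | 0 < q.2.1}, nWolbOp 1 p ∈ {q ∈ S31 | 0 < q.2.1}) ∧
    (∀ U ⊆ S31, (∀ p ∈ U, nWolbOp 1 p ∈ U) → U ⊆ {q ∈ S31 | 0 < q.2.1}) ∧
    (∀ s ∈ S31, s.2.1 = 0 → nWolbOp 1 s ∉ S31) := by
  have h3 : ∀ s ∈ S31, s.2.1 = 0 → nWolbOp 1 s ∉ S31 := by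
    rintro ⟨x, y, z, u⟩ ⟨hx, hy, hz, hu, ha, hup, hs⟩ h0 hmem
    simp only [S31, Set.mem_setOf_eq, nWolbOp] at hmem h0
    obtain ⟨_, _, _, _, _, h6, _⟩ := hmem
    rw [h0] at h6
    have : ((1 - 1) * (2 * x + z) + 0) / (2 * (x + 0 + z)) = 0 := by ring
    rw [this] at h6
    exact lt_irrefl 0 h6
  refine ⟨?_, ?_, h3⟩
  · rintro ⟨x, y, z, u⟩ ⟨⟨hx, hy, hz, hu, ha, hup, hs⟩, hy2⟩
    simp only [S31, Set.mem_setOf_eq, nWolbOp] at *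
    have h2a : 0 < 2 * (x + y + z) := by linarith
    refine ⟨⟨?_, ?_, ?_, ?_, ?_, ?_, ?_⟩, ?_⟩
    · positivity
    · positivity
    · positivity
    · positivity
    · rw [← add_div, ← add_div]
      exact div_pos (by nlinarith) h2a
    · positivity
    · field_simp
      ring
    · exact div_pos (by nlinarith) h2a
  · intro U hU hinv p hp
    refine ⟨hU hp, ?_⟩
    have hpS := hU hp
    rcases lt_or_eq_of_le hpS.2.1 with h | h
    · exact h
    · exact absurd (hU (hinv p hp)) (h3 p hpS h.symm)
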